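/- Let p_k^♯ denote the k-th primorial. For every even integer d with 2 ≤ d < p_{k+1}^♯, the prime-pair singular series satisfies 𝔖(d) ≤ 𝔖(p_k^♯), with equality exactly when d = m·p_k^♯ for some integer m with 1 ≤ m < p_{k+1} having no prime factor exceeding p_k. -/

import Mathlib

open Finset

/-- The twin prime constant `C₂ = ∏_{p > 2} (1 - 1/(p-1)²)`. -/
noncomputable def twinC : ℝ :=
  ∏' p : Nat.Primes, if 2 < (p : ℕ) then (1 - 1 / (((p : ℕ) : ℝ) - 1) ^ 2) else 1

/-- The prime-pair singular series `𝔖(d) = 2C₂ ∏_{p ∣ d, p > 2} (p-1)/(p-2)` for even `d`. -/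
noncomputable def S2 (d : ℕ) : ℝ :=
  2 * twinC * ∏ p ∈ d.primeFactors.filter (fun p => 2 < p), (((p : ℝ) - 1) / ((p : ℝ) - 2))

/-- The `k`-th primorial, the product of the first `k` primes. -/
noncomputable def primorialK (k : ℕ) : ℕ := ∏ i ∈ Finset.range k, Nat.nth Nat.Prime i

namespace S2Proof

/-! ### Positivity of the twin prime constant -/

lemma telescope (N : ℕ) (hN : 2 ≤ N) :
    ∏ n ∈ Icc 2 N, (1 - 1 / ((n : ℝ)) ^ 2) = ((N : ℝ) + 1) / (2 * N) := by
  induction N, hN using Nat.le_induction with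
  | base => norm_num [Finset.Icc_self]
  | succ N hN ih =>
    rw [← Finset.insert_Icc_right_eq_Icc_add_one (by omega), Finset.prod_insert (by simp), ih]
    have h2 : (2 : ℝ) ≤ (N : ℝ) := by exact_mod_cast hN
    have h0 : (N : ℝ) ≠ 0 := by linarith
    have h1 : (N : ℝ) + 1 ≠ 0 := by linarith
    push_cast
    field_simp
    ring

lemma half_le (s : Finset Nat.Primes) :
    (1 / 2 : ℝ) ≤ ∏ p ∈ s,
      (if 2 < (p : ℕ) then (1 - 1 / (((p : ℕ) : ℝ) - 1) ^ 2) else 1) := by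
  classical
  rw [← Finset.prod_filter]
  set t := (s.filter fun p : Nat.Primes => 2 < (p : ℕ)).image
      (fun p : Nat.Primes => (p : ℕ) - 1) with ht
  have hprod : ∏ n ∈ t, (1 - 1 / ((n : ℝ)) ^ 2)
      = ∏ p ∈ s.filter (fun p : Nat.Primes => 2 < (p : ℕ)),
          (1 - 1 / (((p : ℕ) : ℝ) - 1) ^ 2) := by
    rw [ht, Finset.prod_image ?_]
    · refine Finset.prod_congr rfl fun p hp => ?_
      have h2p : 2 < (p : ℕ) := (Finset.mem_filter.1 hp).2
      have : (((p : ℕ) - 1 : ℕ) : ℝ) = ((p : ℕ) : ℝ) - 1 := by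
        rw [Nat.cast_sub (by omega)]; norm_num
      rw [this]
    · intro a _ b _ hab
      have ha := a.2.two_le
      have hb := b.2.two_le
      exact Subtype.ext (by simp only at hab; omega)
  rw [← hprod]
  set N := max (t.sup id) 2 with hNdef
  have hN2 : 2 ≤ N := le_max_right _ _
  have htsub : t ⊆ Icc 2 N := by
    intro n hn
    rw [Finset.mem_Icc]
    obtain ⟨p, hp, rfl⟩ := Finset.mem_image.1 hn
    have h2p : 2 < (p : ℕ) := (Finset.mem_filter.1 hp).2
    refine ⟨by omega, ?_⟩
    exact le_trans (Finset.le_sup (f := id) hn) (le_max_left _ _)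
  have h01 : ∀ n : ℕ, 2 ≤ n → (0 : ℝ) ≤ 1 - 1 / ((n : ℝ)) ^ 2 ∧ 1 - 1 / ((n : ℝ)) ^ 2 ≤ 1 := by
    intro n hn
    have h2 : (2 : ℝ) ≤ (n : ℝ) := by exact_mod_cast hn
    have hsq : (1 : ℝ) ≤ (n : ℝ) ^ 2 := by nlinarith
    have hdiv : 1 / ((n : ℝ)) ^ 2 ≤ 1 := by
      rw [div_le_one (by nlinarith)]; exact hsq
    have hdiv0 : (0 : ℝ) ≤ 1 / ((n : ℝ)) ^ 2 := by positivity
    constructor <;> linarith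
  have hIcc_prod : ∏ n ∈ Icc 2 N, (1 - 1 / ((n : ℝ)) ^ 2) = ((N : ℝ) + 1) / (2 * N) :=
    telescope N hN2
  have hmono : ∏ n ∈ Icc 2 N, (1 - 1 / ((n : ℝ)) ^ 2) ≤ ∏ n ∈ t, (1 - 1 / ((n : ℝ)) ^ 2) := by
    rw [← Finset.prod_sdiff htsub]
    have hle1 : ∏ n ∈ Icc 2 N \ t, (1 - 1 / ((n : ℝ)) ^ 2) ≤ 1 :=
      Finset.prod_le_one
        (fun n hn => (h01 n (Finset.mem_Icc.1 (Finset.mem_sdiff.1 hn).1).1).1)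
        (fun n hn => (h01 n (Finset.mem_Icc.1 (Finset.mem_sdiff.1 hn).1).1).2)
    have hpos : (0 : ℝ) ≤ ∏ n ∈ t, (1 - 1 / ((n : ℝ)) ^ 2) :=
      Finset.prod_nonneg fun n hn => (h01 n (Finset.mem_Icc.1 (htsub hn)).1).1
    exact mul_le_of_le_one_left hpos hle1
  have hNr : (2 : ℝ) ≤ (N : ℝ) := by exact_mod_cast hN2
  have hhalf : (1 / 2 : ℝ) ≤ ((N : ℝ) + 1) / (2 * N) := by
    rw [div_le_div_iff₀ (by norm_num) (by linarith)]
    linarith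
  calc (1 / 2 : ℝ) ≤ ((N : ℝ) + 1) / (2 * N) := hhalf
    _ = ∏ n ∈ Icc 2 N, (1 - 1 / ((n : ℝ)) ^ 2) := hIcc_prod.symm
    _ ≤ _ := hmono

lemma twinC_pos : 0 < twinC := by
  by_cases h : Multipliable
      (fun p : Nat.Primes => if 2 < (p : ℕ) then (1 - 1 / (((p : ℕ) : ℝ) - 1) ^ 2) else 1)
  · have hb := ge_of_tendsto' h.hasProd half_le
    rw [twinC]
    linarith
  · rw [twinC, tprod_eq_one_of_not_multipliable h]
    norm_num

/-! ### The factor function -/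

noncomputable def ff (p : ℕ) : ℝ := ((p : ℝ) - 1) / ((p : ℝ) - 2)

lemma ff_pos {p : ℕ} (hp : 3 ≤ p) : 0 < ff p := by
  have h : (3 : ℝ) ≤ (p : ℝ) := by exact_mod_cast hp
  exact div_pos (by linarith) (by linarith)

lemma one_lt_ff {p : ℕ} (hp : 3 ≤ p) : 1 < ff p := by
  have h : (3 : ℝ) ≤ (p : ℝ) := by exact_mod_cast hp
  rw [ff, lt_div_iff₀ (by linarith)]
  linarith

lemma ff_le_ff {p q : ℕ} (hp : 3 ≤ p) (hpq : p ≤ q) : ff q ≤ ff p := by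
  have h : (3 : ℝ) ≤ (p : ℝ) := by exact_mod_cast hp
  have h2 : (p : ℝ) ≤ (q : ℝ) := by exact_mod_cast hpq
  rw [ff, ff, div_le_div_iff₀ (by linarith) (by linarith)]
  nlinarith

lemma ff_inj {p q : ℕ} (hp : 3 ≤ p) (hpq : p ≤ q) (h : ff q = ff p) : p = q := by
  have h3 : (3 : ℝ) ≤ (p : ℝ) := by exact_mod_cast hp
  have h2 : (p : ℝ) ≤ (q : ℝ) := by exact_mod_cast hpq
  have : (p : ℝ) = (q : ℝ) := by
    rw [ff, ff, div_eq_div_iff (by linarith) (by linarith)] at h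
    nlinarith
  exact_mod_cast this

/-! ### Facts about the nth prime -/

lemma prime_nth (i : ℕ) : (Nat.nth Nat.Prime i).Prime :=
  Nat.nth_mem_of_infinite Nat.infinite_setOf_prime i

lemma three_le_nth {j : ℕ} (hj : 1 ≤ j) : 3 ≤ Nat.nth Nat.Prime j := by
  have := (Nat.nth_le_nth Nat.infinite_setOf_prime).2 hj
  rwa [Nat.nth_prime_one_eq_three] at this

/-! ### The key induction -/

lemma key : ∀ (n : ℕ) (s : Finset ℕ), s.card = n → (∀ p ∈ s, p.Prime ∧ 2 < p) →
    ((∏ j ∈ Icc 1 n, Nat.nth Nat.Prime j) ≤ ∏ p ∈ s, p) ∧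
    ((∏ p ∈ s, ff p) ≤ ∏ j ∈ Icc 1 n, ff (Nat.nth Nat.Prime j)) ∧
    ((∏ p ∈ s, ff p) = (∏ j ∈ Icc 1 n, ff (Nat.nth Nat.Prime j)) ↔
      s = (Icc 1 n).image (Nat.nth Nat.Prime)) := by
  intro n
  induction n with
  | zero =>
    intro s hcard _
    rw [Finset.card_eq_zero] at hcard
    subst hcard
    simp
  | succ n ih =>
    intro s hcard hs
    have hne : s.Nonempty := Finset.card_pos.1 (by omega)
    set q := s.max' hne with hqdef
    have hqs : q ∈ s := s.max'_mem hne
    obtain ⟨hqp, hq2⟩ := hs q hqs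
    have hs' : ∀ p ∈ s.erase q, p.Prime ∧ 2 < p := fun p hp => hs p (Finset.mem_of_mem_erase hp)
    have hcard' : (s.erase q).card = n := by rw [Finset.card_erase_of_mem hqs, hcard]; omega
    obtain ⟨A, B, C⟩ := ih (s.erase q) hcard' hs'
    have hcount : n + 1 < Nat.count Nat.Prime (q + 1) := by
      rw [Nat.count_eq_card_filter_range]
      have h2s : 2 ∉ s := fun h => by have := (hs 2 h).2; omega
      have hsub : insert 2 s ⊆ (Finset.range (q + 1)).filter (fun x => Nat.Prime x) := by
        intro p hp
        rcases Finset.mem_insert.1 hp with rfl | hp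
        · exact Finset.mem_filter.2 ⟨Finset.mem_range.2 (by omega), Nat.prime_two⟩
        · exact Finset.mem_filter.2
            ⟨Finset.mem_range.2 (by have := s.le_max' p hp; omega), (hs p hp).1⟩
      have hcard2 := Finset.card_le_card hsub
      rw [Finset.card_insert_of_notMem h2s, hcard] at hcard2
      omega
    have hq_ge : Nat.nth Nat.Prime (n + 1) ≤ q := by
      have := Nat.nth_lt_of_lt_count hcount
      omega
    have h3 : 3 ≤ Nat.nth Nat.Prime (n + 1) := three_le_nth (by omega)
    have h3q : 3 ≤ q := le_trans h3 hq_ge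
    have hIcc : Icc 1 (n + 1) = insert (n + 1) (Icc 1 n) :=
      (Finset.insert_Icc_right_eq_Icc_add_one (by omega)).symm
    have hmem : (n + 1) ∉ Icc 1 n := by simp
    have hprodIcc_nat : ∏ j ∈ Icc 1 (n + 1), Nat.nth Nat.Prime j
        = Nat.nth Nat.Prime (n + 1) * ∏ j ∈ Icc 1 n, Nat.nth Nat.Prime j := by
      rw [hIcc, Finset.prod_insert hmem]
    have hprodIcc : ∏ j ∈ Icc 1 (n + 1), ff (Nat.nth Nat.Prime j)
        = ff (Nat.nth Nat.Prime (n + 1)) * ∏ j ∈ Icc 1 n, ff (Nat.nth Nat.Prime j) := by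
      rw [hIcc, Finset.prod_insert hmem]
    have hprods_nat : ∏ p ∈ s, p = q * ∏ p ∈ s.erase q, p :=
      (Finset.mul_prod_erase s _ hqs).symm
    have hprods : ∏ p ∈ s, ff p = ff q * ∏ p ∈ s.erase q, ff p :=
      (Finset.mul_prod_erase s ff hqs).symm
    have hpos' : 0 < ∏ p ∈ s.erase q, ff p :=
      Finset.prod_pos fun p hp => ff_pos (by have := hs' p hp; omega)
    have hposI : 0 < ∏ j ∈ Icc 1 n, ff (Nat.nth Nat.Prime j) :=
      Finset.prod_pos fun j hj => ff_pos (three_le_nth (Finset.mem_Icc.1 hj).1)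
    have hffq : 0 < ff q := ff_pos h3q
    have hffb : 0 < ff (Nat.nth Nat.Prime (n + 1)) := ff_pos h3
    have hfle : ff q ≤ ff (Nat.nth Nat.Prime (n + 1)) := ff_le_ff h3 hq_ge
    refine ⟨?_, ?_, ?_, ?_⟩
    · rw [hprodIcc_nat, hprods_nat]
      exact Nat.mul_le_mul hq_ge A
    · rw [hprodIcc, hprods]
      exact mul_le_mul hfle B (le_of_lt hpos') (le_of_lt hffb)
    · intro h
      rw [hprodIcc, hprods] at h
      have hcd : ∏ p ∈ s.erase q, ff p = ∏ j ∈ Icc 1 n, ff (Nat.nth Nat.Prime j) := by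
        refine le_antisymm B ?_
        nlinarith
      have hfq : ff q = ff (Nat.nth Nat.Prime (n + 1)) := by
        rw [hcd] at h
        exact mul_right_cancel₀ (ne_of_gt hposI) h
      have hqe : Nat.nth Nat.Prime (n + 1) = q := ff_inj h3 hq_ge hfq
      have hse := C.1 hcd
      rw [hIcc, Finset.image_insert, hqe, ← hse, Finset.insert_erase hqs]
    · intro h
      rw [h, Finset.prod_image fun x _ y _ hxy =>
        Nat.nth_injective Nat.infinite_setOf_prime hxy]

/-! ### Prime factors of the primorial -/

lemma primeFactors_primorialK (k : ℕ) :
    (primorialK k).primeFactors = (range k).image (Nat.nth Nat.Prime) := by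
  have hinj : ∀ x ∈ range k, ∀ y ∈ range k,
      Nat.nth Nat.Prime x = Nat.nth Nat.Prime y → x = y :=
    fun x _ y _ h => Nat.nth_injective Nat.infinite_setOf_prime h
  have hpe : ∏ p ∈ (range k).image (Nat.nth Nat.Prime), p
      = ∏ i ∈ range k, Nat.nth Nat.Prime i := Finset.prod_image hinj
  rw [primorialK, ← hpe]
  refine Nat.primeFactors_prod ?_
  intro p hp
  obtain ⟨i, _, rfl⟩ := Finset.mem_image.1 hp
  exact prime_nth i

lemma filter_image_range (k : ℕ) (hk : 1 ≤ k) :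
    ((range k).image (Nat.nth Nat.Prime)).filter (fun p => 2 < p)
      = (Icc 1 (k - 1)).image (Nat.nth Nat.Prime) := by
  rw [Finset.filter_image]
  congr 1
  have h2 : ∀ i, 2 < Nat.nth Nat.Prime i ↔ 1 ≤ i := by
    intro i
    rw [← Nat.nth_prime_zero_eq_two]
    rw [Nat.nth_lt_nth Nat.infinite_setOf_prime]
    omega
  ext i
  simp only [Finset.mem_filter, Finset.mem_range, Finset.mem_Icc, h2]
  omega

end S2Proof

open S2Proof in
theorem S2_le_S2_primorial (k : ℕ) (hk : 1 ≤ k) (d : ℕ) (he : Even d)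
    (h2 : 2 ≤ d) (hlt : d < primorialK (k + 1)) :
    S2 d ≤ S2 (primorialK k) ∧
      (S2 d = S2 (primorialK k) ↔
        ∃ m : ℕ, 1 ≤ m ∧ m < Nat.nth Nat.Prime k ∧ d = m * primorialK k ∧
          ∀ p ∈ m.primeFactors, p ≤ Nat.nth Nat.Prime (k - 1)) := by
  classical
  have hinf := Nat.infinite_setOf_prime
  have hd0 : d ≠ 0 := by omega
  set s := d.primeFactors.filter (fun p => 2 < p) with hsdef
  have hs : ∀ p ∈ s, p.Prime ∧ 2 < p := by
    intro p hp
    rw [hsdef, Finset.mem_filter] at hp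
    exact ⟨Nat.prime_of_mem_primeFactors hp.1, hp.2⟩
  obtain ⟨A, B, C⟩ := key s.card s rfl hs
  have h2mem : 2 ∈ d.primeFactors := Nat.mem_primeFactors.2 ⟨Nat.prime_two, he.two_dvd, hd0⟩
  have hfilter_not : d.primeFactors.filter (fun p => ¬ 2 < p) = {2} := by
    ext p
    simp only [Finset.mem_filter, Finset.mem_singleton]
    constructor
    · rintro ⟨hp, h⟩
      have := (Nat.prime_of_mem_primeFactors hp).two_le
      omega
    · rintro rfl
      exact ⟨h2mem, by omega⟩
  have hsplit : (∏ p ∈ s, p) * 2 = ∏ p ∈ d.primeFactors, p := by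
    have := Finset.prod_filter_mul_prod_filter_not d.primeFactors (fun p => 2 < p) (fun p => p)
    rw [hfilter_not] at this
    simpa using this
  have hdvd : (∏ p ∈ s, p) * 2 ∣ d := hsplit ▸ Nat.prod_primeFactors_dvd d
  have hprim_succ : primorialK (k + 1) = 2 * ∏ j ∈ Icc 1 k, Nat.nth Nat.Prime j := by
    have hr : range (k + 1) = insert 0 (Icc 1 k) := by
      ext i
      simp only [Finset.mem_range, Finset.mem_insert, Finset.mem_Icc]
      omega
    rw [primorialK, hr, Finset.prod_insert (by simp), Nat.nth_prime_zero_eq_two]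
  have hslt : (∏ p ∈ s, p) < ∏ j ∈ Icc 1 k, Nat.nth Nat.Prime j := by
    have hle := Nat.le_of_dvd (by omega) hdvd
    have := lt_of_le_of_lt hle hlt
    rw [hprim_succ] at this
    omega
  have hrk : s.card ≤ k - 1 := by
    by_contra hcon
    push_neg at hcon
    have hkr : k ≤ s.card := by omega
    have h1 : ∏ j ∈ Icc 1 k, Nat.nth Nat.Prime j ≤ ∏ j ∈ Icc 1 s.card, Nat.nth Nat.Prime j := by
      apply Finset.prod_le_prod_of_subset_of_one_le' (Finset.Icc_subset_Icc_right hkr)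
      intro i _ _
      exact (prime_nth i).one_lt.le
    exact absurd (lt_of_le_of_lt (le_trans h1 A) hslt) (lt_irrefl _)
  have hsub : Icc 1 s.card ⊆ Icc 1 (k - 1) := Finset.Icc_subset_Icc_right hrk
  have hposr : 0 < ∏ j ∈ Icc 1 s.card, ff (Nat.nth Nat.Prime j) :=
    Finset.prod_pos fun j hj => ff_pos (three_le_nth (Finset.mem_Icc.1 hj).1)
  have hsd : ∏ j ∈ Icc 1 (k - 1), ff (Nat.nth Nat.Prime j)
      = (∏ j ∈ Icc 1 (k - 1) \ Icc 1 s.card, ff (Nat.nth Nat.Prime j))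
        * ∏ j ∈ Icc 1 s.card, ff (Nat.nth Nat.Prime j) := (Finset.prod_sdiff hsub).symm
  have hD1 : 1 ≤ ∏ j ∈ Icc 1 (k - 1) \ Icc 1 s.card, ff (Nat.nth Nat.Prime j) := by
    have := Finset.prod_le_prod (s := Icc 1 (k - 1) \ Icc 1 s.card)
      (f := fun _ => (1 : ℝ)) (g := fun j => ff (Nat.nth Nat.Prime j))
      (fun i _ => zero_le_one)
      (fun i hi => (one_lt_ff (three_le_nth
        (Finset.mem_Icc.1 (Finset.mem_sdiff.1 hi).1).1)).le)
    simpa using this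
  have hle2 : ∏ j ∈ Icc 1 s.card, ff (Nat.nth Nat.Prime j)
      ≤ ∏ j ∈ Icc 1 (k - 1), ff (Nat.nth Nat.Prime j) := by
    rw [hsd]
    exact le_mul_of_one_le_left hposr.le hD1
  have hS2d : S2 d = 2 * twinC * ∏ p ∈ s, ff p := rfl
  have hPfact : (primorialK k).primeFactors.filter (fun p => 2 < p)
      = (Icc 1 (k - 1)).image (Nat.nth Nat.Prime) := by
    rw [primeFactors_primorialK, filter_image_range k hk]
  have hS2P : S2 (primorialK k) = 2 * twinC * ∏ j ∈ Icc 1 (k - 1), ff (Nat.nth Nat.Prime j) := by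
    show 2 * twinC * ∏ p ∈ (primorialK k).primeFactors.filter (fun p => 2 < p), ff p = _
    rw [hPfact]
    congr 1
    exact Finset.prod_image fun x _ y _ hxy => Nat.nth_injective hinf hxy
  have htc : (0 : ℝ) < 2 * twinC := by have := twinC_pos; linarith
  have hP0 : 0 < primorialK k := Finset.prod_pos fun i _ => (prime_nth i).pos
  constructor
  · rw [hS2d, hS2P]
    exact mul_le_mul_of_nonneg_left (le_trans B hle2) htc.le
  · rw [hS2d, hS2P, mul_right_inj' (ne_of_gt htc)]
    constructor
    · intro h
      have hsimage : s = (Icc 1 (k - 1)).image (Nat.nth Nat.Prime) := by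
        by_cases hrk' : s.card = k - 1
        · rw [hrk'] at C
          exact C.1 h
        · exfalso
          have hlt' : s.card < k - 1 := by omega
          have hDne : (k - 1) ∈ Icc 1 (k - 1) \ Icc 1 s.card := by
            simp only [Finset.mem_sdiff, Finset.mem_Icc]
            omega
          have hD1' : 1 < ∏ j ∈ Icc 1 (k - 1) \ Icc 1 s.card, ff (Nat.nth Nat.Prime j) := by
            rw [← Finset.mul_prod_erase _ _ hDne]
            have hone : 1 < ff (Nat.nth Nat.Prime (k - 1)) := one_lt_ff (three_le_nth (by omega))
            have hrest : 1 ≤ ∏ j ∈ (Icc 1 (k - 1) \ Icc 1 s.card).erase (k - 1),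
                ff (Nat.nth Nat.Prime j) := by
              have := Finset.prod_le_prod
                (s := (Icc 1 (k - 1) \ Icc 1 s.card).erase (k - 1))
                (f := fun _ => (1 : ℝ)) (g := fun j => ff (Nat.nth Nat.Prime j))
                (fun i _ => zero_le_one)
                (fun i hi => (one_lt_ff (three_le_nth
                  (Finset.mem_Icc.1 (Finset.mem_sdiff.1 (Finset.mem_of_mem_erase hi)).1).1)).le)
              simpa using this
            nlinarith
          have : ∏ j ∈ Icc 1 (k - 1), ff (Nat.nth Nat.Prime j)
              ≤ ∏ j ∈ Icc 1 s.card, ff (Nat.nth Nat.Prime j) := h ▸ B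
          rw [hsd] at this
          nlinarith
      have hdpf : d.primeFactors = (range k).image (Nat.nth Nat.Prime) := by
        have hins : d.primeFactors = insert 2 s := by
          ext p
          rw [hsdef]
          simp only [Finset.mem_insert, Finset.mem_filter]
          constructor
          · intro hp
            have := (Nat.prime_of_mem_primeFactors hp).two_le
            rcases Nat.lt_or_ge 2 p with h' | h'
            · exact Or.inr ⟨hp, h'⟩
            · exact Or.inl (by omega)
          · rintro (rfl | ⟨hp, _⟩)
            · exact h2mem
            · exact hp
        have hrange : range k = insert 0 (Icc 1 (k - 1)) := by
          ext i
          simp only [Finset.mem_range, Finset.mem_insert, Finset.mem_Icc]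
          omega
        rw [hins, hsimage, hrange, Finset.image_insert, Nat.nth_prime_zero_eq_two]
      have hPdvd : primorialK k ∣ d := by
        have h1 : ∏ p ∈ d.primeFactors, p = primorialK k := by
          rw [hdpf, primorialK]
          exact Finset.prod_image fun x _ y _ hxy => Nat.nth_injective hinf hxy
        rw [← h1]
        exact Nat.prod_primeFactors_dvd d
      obtain ⟨m, hm⟩ := hPdvd
      refine ⟨m, ?_, ?_, by rw [hm, mul_comm], ?_⟩
      · rcases Nat.eq_zero_or_pos m with rfl | h'
        · exfalso; rw [hm] at hd0; simp at hd0
        · exact h'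
      · have hsucc : primorialK (k + 1) = primorialK k * Nat.nth Nat.Prime k := by
          rw [primorialK, primorialK, Finset.prod_range_succ]
        have : primorialK k * m < primorialK k * Nat.nth Nat.Prime k := by
          rw [← hm, ← hsucc]; exact hlt
        exact Nat.lt_of_mul_lt_mul_left this
      · intro p hp
        have hmdvd : m ∣ d := ⟨primorialK k, by rw [hm]; ring⟩
        have hpd : p ∈ d.primeFactors := Nat.primeFactors_mono hmdvd hd0 hp
        rw [hdpf] at hpd
        obtain ⟨i, hi, rfl⟩ := Finset.mem_image.1 hpd
        exact (Nat.nth_le_nth hinf).2 (by have := Finset.mem_range.1 hi; omega)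
    · rintro ⟨m, hm1, hmk, hdm, hmp⟩
      have hm0 : m ≠ 0 := by omega
      have hP0' : primorialK k ≠ 0 := hP0.ne'
      have hsubm : m.primeFactors ⊆ (range k).image (Nat.nth Nat.Prime) := by
        intro p hp
        have hpp := Nat.prime_of_mem_primeFactors hp
        have hple := hmp p hp
        have hc : Nat.count Nat.Prime p ≤ k - 1 := by
          have hnc := Nat.nth_count (p := Nat.Prime) hpp
          rw [← hnc] at hple
          exact (Nat.nth_le_nth hinf).1 hple
        exact Finset.mem_image.2 ⟨_, Finset.mem_range.2 (by omega), Nat.nth_count hpp⟩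
      have hdpf : d.primeFactors = (range k).image (Nat.nth Nat.Prime) := by
        rw [hdm, Nat.primeFactors_mul hm0 hP0', primeFactors_primorialK]
        exact Finset.union_eq_right.2 hsubm
      have hsimage : s = (Icc 1 (k - 1)).image (Nat.nth Nat.Prime) := by
        rw [hsdef, hdpf, filter_image_range k hk]
      rw [hsimage]
      exact Finset.prod_image fun x _ y _ hxy => Nat.nth_injective hinf hxy
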